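/- Let F(x) = x^{-k} L(x) for x large, where k > 0 and L is slowly varying, and define K(x) = ∫ₓ^∞ (1 - x²/y²)^{(d-2)/2} |dF(y)| for d ≥ 3. Then K(x) ~ F(x) · ((d-2)/2) · B((k+2)/2, d/2 − 1) as x → ∞. -/

import Mathlib

open Filter Topology MeasureTheory

/-- Beta function via Gamma functions. -/
noncomputable def betaFn (x y : ℝ) : ℝ := Real.Gamma x * Real.Gamma y / Real.Gamma (x + y)

/-- `L` is slowly varying at infinity. -/
def SlowlyVarying (L : ℝ → ℝ) : Prop :=
  ∀ lam : ℝ, 0 < lam → Tendsto (fun x => L (lam * x) / L x) atTop (nhds 1)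

lemma realBeta {u v : ℝ} (hu : 0 < u) (hv : 0 < v) :
    ∫ x in (0:ℝ)..1, x ^ (u - 1) * (1 - x) ^ (v - 1) = betaFn u v := by
  have hB : Complex.betaIntegral (u : ℂ) (v : ℂ)
      = ((∫ x in (0:ℝ)..1, x ^ (u - 1) * (1 - x) ^ (v - 1) : ℝ) : ℂ) := by
    rw [Complex.betaIntegral, ← intervalIntegral.integral_ofReal]
    refine intervalIntegral.integral_congr fun x hx => ?_
    rw [Set.uIcc_of_le (zero_le_one' ℝ)] at hx
    have h1x : (0:ℝ) ≤ 1 - x := by linarith [hx.2]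
    rw [Complex.ofReal_mul, Complex.ofReal_cpow hx.1, Complex.ofReal_cpow h1x]
    push_cast
    ring
  have key := Complex.Gamma_mul_Gamma_eq_betaIntegral
    (s := (u:ℂ)) (t := (v:ℂ)) (by simpa using hu) (by simpa using hv)
  rw [hB, ← Complex.ofReal_add, Complex.Gamma_ofReal, Complex.Gamma_ofReal,
    Complex.Gamma_ofReal, ← Complex.ofReal_mul, ← Complex.ofReal_mul] at key
  have key' : Real.Gamma u * Real.Gamma v
      = Real.Gamma (u + v) * ∫ x in (0:ℝ)..1, x ^ (u - 1) * (1 - x) ^ (v - 1) :=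
    Complex.ofReal_injective key
  have hG : Real.Gamma (u + v) ≠ 0 := (Real.Gamma_pos_of_pos (by linarith)).ne'
  rw [betaFn, eq_div_iff hG, mul_comm]
  exact key'.symm

theorem stmt_11 (d : ℕ) (hd : 3 ≤ d) (k : ℝ) (hk : 0 < k) (F L : ℝ → ℝ)
    (hL : SlowlyVarying L) (hF : ∀ᶠ x in atTop, F x = x ^ (-k) * L x)
    (S : StieltjesFunction ℝ) (hS : ∀ x, S x = -F x) :
    Tendsto (fun x : ℝ =>
        (∫ y in Set.Ioi x, (1 - x ^ 2 / y ^ 2) ^ (((d : ℝ) - 2) / 2) ∂S.measure)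
          / (F x * (((d : ℝ) - 2) / 2) * betaFn ((k + 2) / 2) ((d : ℝ) / 2 - 1)))
      atTop (nhds 1) := by
  have h3 : (3:ℝ) ≤ (d:ℝ) := by exact_mod_cast hd
  set p : ℝ := ((d : ℝ) - 2) / 2 with hp_def
  have hp : 0 < p := by rw [hp_def]; linarith
  -- basic facts about F
  have hA : Antitone F := by
    intro a b hab
    have := S.mono hab
    rw [hS a, hS b] at this
    linarith
  have hFm : Measurable F := by
    have : F = fun x => -(S x) := funext fun x => by rw [hS x, neg_neg]
    rw [this]
    exact S.mono.measurable.neg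
  have hLne : ∀ᶠ x in atTop, L x ≠ 0 := by
    filter_upwards [(hL 2 two_pos).eventually_ne (one_ne_zero)] with x hx
    intro h0
    rw [h0, div_zero] at hx
    exact hx rfl
  -- ratio limit
  have hRatio : ∀ lam : ℝ, 0 < lam →
      Tendsto (fun x => F (x * lam) / F x) atTop (nhds (lam ^ (-k))) := by
    intro lam hlam
    have h1 : Tendsto (fun x => lam ^ (-k) * (L (lam * x) / L x)) atTop
        (nhds (lam ^ (-k))) := by
      simpa using (hL lam hlam).const_mul (lam ^ (-k))
    refine h1.congr' ?_
    have h2 : ∀ᶠ x : ℝ in atTop, F (x * lam) = (x * lam) ^ (-k) * L (x * lam) :=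
      (tendsto_id.atTop_mul_const hlam).eventually hF
    filter_upwards [hF, h2, eventually_gt_atTop 0, hLne] with x hFx hFlx hx hLx
    rw [hFx, hFlx, Real.mul_rpow hx.le hlam.le, mul_comm x lam]
    have hxk : x ^ (-k) ≠ 0 := (Real.rpow_pos_of_pos hx _).ne'
    field_simp
  have h2k1 : (2:ℝ) ^ (-k) < 1 :=
    Real.rpow_lt_one_of_one_lt_of_neg one_lt_two (neg_neg_iff_pos.mpr hk)
  -- positivity of F
  have hFpos : ∀ x, 0 < F x := by
    have hev : ∀ᶠ x in atTop, 0 < F x := by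
      by_contra hcon
      obtain ⟨x₁, hFneg, hFeq, hLx₁, hx₁1⟩ :=
        ((Filter.not_eventually.mp hcon).and_eventually
          (hF.and (hLne.and (eventually_ge_atTop 1)))).exists
      push_neg at hFneg
      have hx₁0 : (0:ℝ) < x₁ := lt_of_lt_of_le one_pos hx₁1
      have hFx₁ : F x₁ < 0 := by
        rcases lt_or_eq_of_le hFneg with h | h
        · exact h
        · exfalso
          rw [hFeq] at h
          have := (Real.rpow_pos_of_pos hx₁0 (-k)).ne'
          exact hLx₁ (by
            rcases mul_eq_zero.mp h with h' | h'
            · exact absurd h' this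
            · exact h')
      obtain ⟨x, hxlt, hxx₁⟩ :=
        (((hRatio 2 two_pos).eventually_lt_const h2k1).and
          (eventually_ge_atTop x₁)).exists
      have hFx : F x ≤ F x₁ := hA hxx₁
      have hFx2 : F (x * 2) ≤ F x := hA (by nlinarith)
      have h1le : (1:ℝ) ≤ F (x * 2) / F x := by
        rw [le_div_iff_of_neg (by linarith : F x < 0)]
        linarith
      linarith
    intro x
    obtain ⟨y, hy, hxy⟩ := (hev.and (eventually_ge_atTop x)).exists
    exact lt_of_lt_of_le hy (hA hxy)
  -- F tends to 0
  have hF0 : Tendsto F atTop (nhds 0) := by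
    have hbdd : BddBelow (Set.range F) :=
      ⟨0, fun y ⟨x, hx⟩ => hx ▸ (hFpos x).le⟩
    have hlim := tendsto_atTop_ciInf hA hbdd
    have hc0 : 0 ≤ ⨅ x, F x := le_ciInf fun x => (hFpos x).le
    rcases eq_or_lt_of_le hc0 with h | h
    · rwa [← h] at hlim
    · exfalso
      have h2 : Tendsto (fun x => F (x * 2)) atTop (nhds (⨅ x, F x)) :=
        hlim.comp (tendsto_id.atTop_mul_const two_pos)
      have h3' : Tendsto (fun x => F (x * 2) / F x) atTop
          (nhds ((⨅ x, F x) / (⨅ x, F x))) := h2.div hlim h.ne'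
      rw [div_self h.ne'] at h3'
      have := tendsto_nhds_unique h3' (hRatio 2 two_pos)
      linarith
  -- measure of Ioi
  have hS0 : Tendsto (fun x => S x) atTop (nhds 0) := by
    have : (fun x => S x) = fun x => -F x := funext hS
    rw [this]
    simpa using hF0.neg
  have hmeas : ∀ x : ℝ, S.measure (Set.Ioi x) = ENNReal.ofReal (F x) := by
    intro x
    have hmono : Monotone (fun b => Set.Ioc x b) :=
      fun a b hab => Set.Ioc_subset_Ioc_right hab
    have h1 : Tendsto (fun b => S.measure (Set.Ioc x b)) atTop
        (nhds (S.measure (Set.Ioi x))) := by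
      have := tendsto_measure_iUnion_atTop (μ := S.measure) hmono
      rwa [Set.iUnion_Ioc_right] at this
    have h2 : Tendsto (fun b => S.measure (Set.Ioc x b)) atTop
        (nhds (ENNReal.ofReal (F x))) := by
      simp_rw [S.measure_Ioc]
      have h4 : Tendsto (fun b => S b - S x) atTop (nhds (0 - S x)) :=
        hS0.sub_const _
      have h5 := (ENNReal.continuous_ofReal.tendsto _).comp h4
      have : (0 : ℝ) - S x = F x := by rw [hS x]; ring
      rw [this] at h5
      exact h5
    exact tendsto_nhds_unique h1 h2
  -- the auxiliary function
  set sf : ℝ → ℝ := fun t => (1 - t ^ p⁻¹) ^ (-(2⁻¹) : ℝ) with hsf_def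
  have hc0 : ∀ t ∈ Set.Ioo (0:ℝ) 1, 0 < 1 - t ^ p⁻¹ := by
    intro t ht
    have h' : t ^ p⁻¹ < 1 := Real.rpow_lt_one ht.1.le ht.2 (by positivity)
    linarith
  have hsf_pos : ∀ t ∈ Set.Ioo (0:ℝ) 1, 0 < sf t := fun t ht =>
    Real.rpow_pos_of_pos (hc0 t ht) _
  have hsf_ge : ∀ t ∈ Set.Ioo (0:ℝ) 1, 1 ≤ sf t := by
    intro t ht
    have h1 : 0 < t ^ p⁻¹ := Real.rpow_pos_of_pos ht.1 _
    exact Real.one_le_rpow_of_pos_of_le_one_of_nonpos (hc0 t ht) (by linarith)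
      (by norm_num)
  -- measurability of sf
  have hsfm : Measurable sf :=
    ((measurable_const.sub (measurable_id.pow measurable_const)).pow measurable_const)
  -- key identity
  have hKI : ∀ x : ℝ, 0 < x →
      (∫ y in Set.Ioi x, (1 - x ^ 2 / y ^ 2) ^ p ∂S.measure)
        = ∫ t in Set.Ioo (0:ℝ) 1, F (x * sf t) := by
    intro x hx
    have hgm : Measurable fun y : ℝ => (1 - x ^ 2 / y ^ 2) ^ p :=
      ((measurable_const.sub (measurable_const.div (measurable_id.pow measurable_const))).pow
        measurable_const)
    have hbase : ∀ y : ℝ, x < y → 0 < 1 - x ^ 2 / y ^ 2 := by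
      intro y hy
      have hy0 : 0 < y := hx.trans hy
      have h1 : x ^ 2 < y ^ 2 := by nlinarith
      have h2 : x ^ 2 / y ^ 2 < 1 := (div_lt_one (by positivity)).mpr h1
      linarith
    have hnn : ∀ y ∈ Set.Ioi x, 0 ≤ (1 - x ^ 2 / y ^ 2) ^ p := fun y hy =>
      Real.rpow_nonneg (hbase y hy).le _
    have hL1 : (∫ y in Set.Ioi x, (1 - x ^ 2 / y ^ 2) ^ p ∂S.measure)
        = (∫⁻ y in Set.Ioi x, ENNReal.ofReal ((1 - x ^ 2 / y ^ 2) ^ p) ∂S.measure).toReal := by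
      refine integral_eq_lintegral_of_nonneg_ae ?_ hgm.aestronglyMeasurable
      exact (ae_restrict_iff' measurableSet_Ioi).mpr (ae_of_all _ hnn)
    have hR1 : (∫ t in Set.Ioo (0:ℝ) 1, F (x * sf t))
        = (∫⁻ t in Set.Ioo (0:ℝ) 1, ENNReal.ofReal (F (x * sf t))).toReal := by
      refine integral_eq_lintegral_of_nonneg_ae (ae_of_all _ fun t => (hFpos _).le) ?_
      exact (hFm.comp (measurable_const.mul hsfm)).aestronglyMeasurable
    -- key iff
    have keyiff : ∀ t ∈ Set.Ioo (0:ℝ) 1, ∀ y : ℝ, x < y →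
        (t < (1 - x ^ 2 / y ^ 2) ^ p ↔ x * sf t < y) := by
      intro t ht y hxy
      have hy0 : 0 < y := hx.trans hxy
      have hb0 : 0 < 1 - x ^ 2 / y ^ 2 := hbase y hxy
      have hct : 0 < 1 - t ^ p⁻¹ := hc0 t ht
      have step1 : t < (1 - x ^ 2 / y ^ 2) ^ p ↔ t ^ p⁻¹ < 1 - x ^ 2 / y ^ 2 := by
        constructor
        · intro h
          have h' := Real.rpow_lt_rpow ht.1.le h (by positivity : (0:ℝ) < p⁻¹)
          rwa [Real.rpow_rpow_inv hb0.le hp.ne'] at h'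
        · intro h
          have h' := Real.rpow_lt_rpow (Real.rpow_nonneg ht.1.le _) h hp
          rwa [Real.rpow_inv_rpow ht.1.le hp.ne'] at h'
      have hsq : (x * sf t) ^ 2 = x ^ 2 / (1 - t ^ p⁻¹) := by
        have h1 : (sf t) ^ 2 = (1 - t ^ p⁻¹)⁻¹ := by
          have : (sf t) ^ 2 = ((1 - t ^ p⁻¹) ^ (-(2⁻¹) : ℝ)) ^ ((2:ℕ) : ℝ) := by
            rw [Real.rpow_natCast]
          rw [this, ← Real.rpow_mul hct.le]
          norm_num [Real.rpow_neg_one]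
        rw [mul_pow, h1, div_eq_mul_inv]
      rw [step1]
      constructor
      · intro h
        have h2 : x ^ 2 / y ^ 2 < 1 - t ^ p⁻¹ := by linarith
        have hy2 : (0:ℝ) < y ^ 2 := by positivity
        have h4 : x ^ 2 < (1 - t ^ p⁻¹) * y ^ 2 := (div_lt_iff₀ hy2).mp h2
        have h5 : (x * sf t) ^ 2 < y ^ 2 := by
          rw [hsq, div_lt_iff₀ hct]
          linarith
        exact lt_of_pow_lt_pow_left₀ 2 hy0.le h5
      · intro h
        have hst : 0 ≤ x * sf t := by positivity
        have h5 : (x * sf t) ^ 2 < y ^ 2 := by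
          exact pow_lt_pow_left₀ h hst two_ne_zero
        rw [hsq] at h5
        have h6 : x ^ 2 < y ^ 2 * (1 - t ^ p⁻¹) := (div_lt_iff₀ hct).mp h5
        have h7 : x ^ 2 / y ^ 2 < 1 - t ^ p⁻¹ := by
          rw [div_lt_iff₀ (by positivity : (0:ℝ) < y ^ 2)]
          linarith
        linarith
    -- the layer cake argument
    have key : (∫⁻ y in Set.Ioi x, ENNReal.ofReal ((1 - x ^ 2 / y ^ 2) ^ p) ∂S.measure)
        = ∫⁻ t in Set.Ioo (0:ℝ) 1, ENNReal.ofReal (F (x * sf t)) := by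
      rw [lintegral_eq_lintegral_meas_lt (S.measure.restrict (Set.Ioi x))
        ((ae_restrict_iff' measurableSet_Ioi).mpr (ae_of_all _ hnn)) hgm.aemeasurable]
      have hset : ∀ᵐ t ∂(volume : Measure ℝ), t ∈ Set.Ioi (0:ℝ) →
          (S.measure.restrict (Set.Ioi x)) {a : ℝ | t < (1 - x ^ 2 / a ^ 2) ^ p}
            = Set.indicator (Set.Ioo (0:ℝ) 1)
                (fun t => ENNReal.ofReal (F (x * sf t))) t := by
        refine ae_of_all _ fun t ht => ?_
        rw [Measure.restrict_apply (measurableSet_lt measurable_const hgm)]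
        by_cases ht1 : t < 1
        · have hmem : t ∈ Set.Ioo (0:ℝ) 1 := ⟨ht, ht1⟩
          rw [Set.indicator_of_mem hmem]
          have hseteq : {a : ℝ | t < (1 - x ^ 2 / a ^ 2) ^ p} ∩ Set.Ioi x
              = Set.Ioi (x * sf t) := by
            ext y
            simp only [Set.mem_inter_iff, Set.mem_setOf_eq, Set.mem_Ioi]
            constructor
            · rintro ⟨hty, hxy⟩
              exact (keyiff t hmem y hxy).mp hty
            · intro hy
              have hxy : x < y := by
                have : x * 1 ≤ x * sf t :=
                  mul_le_mul_of_nonneg_left (hsf_ge t hmem) hx.le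
                rw [mul_one] at this
                exact lt_of_le_of_lt this hy
              exact ⟨(keyiff t hmem y hxy).mpr hy, hxy⟩
          rw [hseteq, hmeas]
        · rw [Set.indicator_of_notMem (fun hmem => ht1 hmem.2)]
          have hseteq : {a : ℝ | t < (1 - x ^ 2 / a ^ 2) ^ p} ∩ Set.Ioi x = ∅ := by
            ext y
            simp only [Set.mem_inter_iff, Set.mem_setOf_eq, Set.mem_Ioi,
              Set.mem_empty_iff_false, iff_false, not_and]
            intro hty hxy
            have hy0 : 0 < y := hx.trans hxy
            have hb1 : 1 - x ^ 2 / y ^ 2 < 1 := by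
              have : 0 < x ^ 2 / y ^ 2 := by positivity
              linarith
            have := Real.rpow_lt_one (hbase y hxy).le hb1 hp
            push_neg at ht1
            linarith
          rw [hseteq]
          simp
      rw [setLIntegral_congr_fun_ae measurableSet_Ioi hset,
        lintegral_indicator measurableSet_Ioo, Measure.restrict_restrict measurableSet_Ioo,
        Set.inter_eq_left.mpr (fun t ht => ht.1)]
    rw [hL1, hR1, key]
  -- dominated convergence
  have hDCT : Tendsto (fun x => (∫ t in Set.Ioo (0:ℝ) 1, F (x * sf t)) / F x) atTop
      (nhds (∫ t in Set.Ioo (0:ℝ) 1, (sf t) ^ (-k))) := by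
    have h := tendsto_integral_filter_of_dominated_convergence
      (μ := (volume : Measure ℝ).restrict (Set.Ioo 0 1))
      (F := fun (x : ℝ) (t : ℝ) => F (x * sf t) / F x)
      (f := fun t => (sf t) ^ (-k)) (l := atTop) (bound := fun _ => 1)
      (Filter.Eventually.of_forall fun x =>
        ((hFm.comp (measurable_const.mul hsfm)).div_const (F x)).aestronglyMeasurable)
      ?_ ?_ ?_
    · have heq : (fun x : ℝ => ∫ t in Set.Ioo (0:ℝ) 1, F (x * sf t) / F x)
          = fun x : ℝ => (∫ t in Set.Ioo (0:ℝ) 1, F (x * sf t)) / F x := by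
        funext x
        exact integral_div (F x) _
      rwa [heq] at h
    · -- bound
      filter_upwards [eventually_gt_atTop (0:ℝ)] with x hx
      refine (ae_restrict_iff' measurableSet_Ioo).mpr (ae_of_all _ fun t ht => ?_)
      have h1 : x ≤ x * sf t := le_mul_of_one_le_right hx.le (hsf_ge t ht)
      have h2 : F (x * sf t) ≤ F x := hA h1
      have h3 : 0 ≤ F (x * sf t) / F x := div_nonneg (hFpos _).le (hFpos _).le
      rw [Real.norm_eq_abs, abs_of_nonneg h3]
      exact (div_le_one (hFpos x)).mpr h2
    · exact integrable_const 1
    · refine (ae_restrict_iff' measurableSet_Ioo).mpr (ae_of_all _ fun t ht => ?_)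
      exact hRatio (sf t) (hsf_pos t ht)
  -- value of the limit integral
  have hCval : (∫ t in Set.Ioo (0:ℝ) 1, (sf t) ^ (-k))
      = p * betaFn ((k + 2) / 2) p := by
    have e0 : (∫ t in Set.Ioo (0:ℝ) 1, (sf t) ^ (-k))
        = ∫ t in Set.Ioo (0:ℝ) 1, (1 - t ^ p⁻¹) ^ (k / 2) := by
      refine setIntegral_congr_fun measurableSet_Ioo fun t ht => ?_
      have hct := hc0 t ht
      have : sf t ^ (-k) = ((1 - t ^ p⁻¹) ^ (-(2⁻¹) : ℝ)) ^ (-k) := rfl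
      rw [this, ← Real.rpow_mul hct.le]
      norm_num
      ring_nf
    have e1 : (∫ t in Set.Ioo (0:ℝ) 1, (1 - t ^ p⁻¹) ^ (k / 2))
        = ∫ t in (0:ℝ)..1, (1 - t ^ p⁻¹) ^ (k / 2) := by
      rw [intervalIntegral.integral_of_le zero_le_one, integral_Ioc_eq_integral_Ioo]
    have hgcont : Continuous fun v : ℝ => (1 - v ^ p⁻¹) ^ (k / 2) := by
      refine Continuous.rpow_const ?_ fun v => Or.inr (by positivity)
      exact continuous_const.sub (continuous_id.rpow_const fun v => Or.inr (by positivity))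
    have hfcont : Continuous fun u : ℝ => u ^ p :=
      continuous_id.rpow_const fun v => Or.inr hp.le
    have hsubst := intervalIntegral.integral_comp_smul_deriv'''
      (f := fun u : ℝ => u ^ p) (f' := fun u : ℝ => p * u ^ (p - 1))
      (g := fun v : ℝ => (1 - v ^ p⁻¹) ^ (k / 2)) (a := 0) (b := 1)
      hfcont.continuousOn ?_ hgcont.continuousOn ?_ ?_
    · have h01 : ((fun u : ℝ => u ^ p) 0 : ℝ) = 0 := by
        simp [Real.zero_rpow hp.ne']
      have h11 : ((fun u : ℝ => u ^ p) 1 : ℝ) = 1 := by simp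
      rw [Real.zero_rpow hp.ne', Real.one_rpow] at hsubst
      have e2 : (∫ x in (0:ℝ)..1, (fun u : ℝ => p * u ^ (p - 1)) x •
            ((fun v : ℝ => (1 - v ^ p⁻¹) ^ (k / 2)) ∘ fun u : ℝ => u ^ p) x)
          = ∫ u in (0:ℝ)..1, p * (u ^ (p - 1) * (1 - u) ^ (k / 2)) := by
        refine intervalIntegral.integral_congr fun u hu => ?_
        rw [Set.uIcc_of_le (zero_le_one' ℝ)] at hu
        have h' : ((u ^ p) ^ p⁻¹ : ℝ) = u := Real.rpow_rpow_inv hu.1 hp.ne'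
        simp only [smul_eq_mul, Function.comp, h']
        ring
      rw [e2, intervalIntegral.integral_const_mul] at hsubst
      have e3 : (∫ u in (0:ℝ)..1, u ^ (p - 1) * (1 - u) ^ (k / 2))
          = betaFn p ((k + 2) / 2) := by
        have : ∀ u : ℝ, u ^ (p - 1) * (1 - u) ^ ((k + 2) / 2 - 1)
            = u ^ (p - 1) * (1 - u) ^ (k / 2) := by
          intro u
          have he : (k + 2) / 2 - 1 = k / 2 := by ring
          rw [he]
        rw [← realBeta hp (by linarith : (0:ℝ) < (k + 2) / 2)]
        refine intervalIntegral.integral_congr fun u hu => ?_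
        rw [this u]
      rw [e3] at hsubst
      have hbsymm : betaFn p ((k + 2) / 2) = betaFn ((k + 2) / 2) p := by
        rw [betaFn, betaFn, mul_comm (Real.Gamma p), add_comm p]
      have ebeta : (∫ t in (0:ℝ)..1, (1 - t ^ p⁻¹) ^ (k / 2))
          = ∫ u in (0:ℝ)..1, (fun v : ℝ => (1 - v ^ p⁻¹) ^ (k / 2)) u := rfl
      rw [e0, e1, ebeta, ← hsubst, hbsymm]
    · intro u hu
      simp only [min_self, ge_iff_le, zero_le_one, min_eq_left, max_eq_right] at hu
      have hu0 : u ≠ 0 := ne_of_gt hu.1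
      exact (Real.hasDerivAt_rpow_const (Or.inl hu0)).hasDerivWithinAt
    · exact (hgcont.continuousOn).integrableOn_compact (isCompact_uIcc.image hfcont)
    · have h1 : IntervalIntegrable (fun u : ℝ => u ^ (p - 1)) volume 0 1 :=
        intervalIntegral.intervalIntegrable_rpow' (by linarith)
      have h1' : IntegrableOn (fun u : ℝ => u ^ (p - 1)) (Set.uIcc 0 1) :=
        (intervalIntegrable_iff').mp h1
      have h2 : IntegrableOn
          (fun u : ℝ => u ^ (p - 1) * (1 - (u ^ p) ^ p⁻¹) ^ (k / 2)) (Set.uIcc 0 1) :=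
        h1'.mul_continuousOn (hgcont.comp hfcont).continuousOn isCompact_uIcc
      simp only [Function.comp, smul_eq_mul]
      have h3 := h2.const_mul p
      simpa [mul_assoc, IntegrableOn] using h3
  -- final assembly
  have hBpos : 0 < betaFn ((k + 2) / 2) ((d:ℝ) / 2 - 1) := by
    have h1 : 0 < (k + 2) / 2 := by linarith
    have h2 : 0 < (d:ℝ) / 2 - 1 := by linarith
    have h3' : 0 < (k + 2) / 2 + ((d:ℝ) / 2 - 1) := by linarith
    exact div_pos (mul_pos (Real.Gamma_pos_of_pos h1) (Real.Gamma_pos_of_pos h2))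
      (Real.Gamma_pos_of_pos h3')
  have hpd : ((d:ℝ) / 2 - 1) = p := by rw [hp_def]; ring
  set B := betaFn ((k + 2) / 2) ((d:ℝ) / 2 - 1) with hB_def
  have hpB : p * B ≠ 0 := (mul_pos hp hBpos).ne'
  have hBp : B = betaFn ((k + 2) / 2) p := by rw [hB_def, hpd]
  have hfinal : Tendsto
      (fun x : ℝ => ((∫ t in Set.Ioo (0:ℝ) 1, F (x * sf t)) / F x) / (p * B))
      atTop (nhds 1) := by
    have h := hDCT.div_const (p * B)
    rw [hCval, ← hBp, div_self hpB] at h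
    exact h
  refine hfinal.congr' ?_
  filter_upwards [eventually_gt_atTop (0:ℝ)] with x hx
  rw [div_div, ← mul_assoc, hKI x hx]
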